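/- For any d×d Bernoulli-compatible matrix B and any d×d tail-dependence matrix Λ, the matrix L(B ∘ Λ), obtained from the Hadamard product B ∘ Λ by replacing all diagonal entries with 1, is a tail-dependence matrix. In particular, L(B) is a tail-dependence matrix for every Bernoulli-compatible matrix B (Proposition 4.3). -/

import Mathlib

open MeasureTheory ProbabilityTheory Filter Set

noncomputable section

/-- A Bernoulli-compatible matrix: `B i j = E[X i * X j]` for some random vector `X`
taking values in `{0,1}^d` on some probability space. -/
def IsBernoulliCompatible {d : ℕ} (B : Matrix (Fin d) (Fin d) ℝ) : Prop :=
  ∃ (Ω : Type) (_ : MeasurableSpace Ω) (μ : Measure Ω),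
    IsProbabilityMeasure μ ∧
    ∃ X : Ω → Fin d → ℝ, Measurable X ∧
      (∀ ω i, X ω i = 0 ∨ X ω i = 1) ∧
      (∀ i j, B i j = ∫ ω, X ω i * X ω j ∂μ)

/-- The (lower) tail-dependence coefficient of `Yi` and `Yj` exists and equals `l`:
`P(Yi ≤ u, Yj ≤ u)/u → l` as `u ↓ 0`. -/
def HasTailDepCoeff {Ω : Type} [MeasurableSpace Ω] (μ : Measure Ω)
    (Yi Yj : Ω → ℝ) (l : ℝ) : Prop :=
  Filter.Tendsto (fun u : ℝ => (μ {ω | Yi ω ≤ u ∧ Yj ω ≤ u}).toReal / u)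
    (nhdsWithin 0 (Set.Ioi 0)) (nhds l)

/-- The uniform distribution on `[0,1]`. -/
def stdUniform : Measure ℝ := volume.restrict (Set.Icc (0:ℝ) 1)

/-- A tail-dependence matrix: the matrix of pairwise (lower) tail-dependence coefficients
of some random vector with standard uniform margins. -/
def IsTailDependenceMatrix {d : ℕ} (Λ : Matrix (Fin d) (Fin d) ℝ) : Prop :=
  ∃ (Ω : Type) (_ : MeasurableSpace Ω) (μ : Measure Ω),
    IsProbabilityMeasure μ ∧
    ∃ Y : Ω → Fin d → ℝ, Measurable Y ∧
      (∀ i, μ.map (fun ω => Y ω i) = stdUniform) ∧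
      (∀ i j, HasTailDepCoeff μ (fun ω => Y ω i) (fun ω => Y ω j) (Λ i j))

/-- The map `L`: replace all diagonal entries of a square matrix by `1`. -/
def diagOne {d : ℕ} (A : Matrix (Fin d) (Fin d) ℝ) : Matrix (Fin d) (Fin d) ℝ :=
  Matrix.of fun i j => if i = j then 1 else A i j

instance : IsProbabilityMeasure stdUniform :=
  ⟨by simp [stdUniform, Real.volume_Icc]⟩

lemma stdUniform_Iic {u : ℝ} (h0 : 0 ≤ u) (h1 : u ≤ 1) :
    stdUniform (Iic u) = ENNReal.ofReal u := by
  rw [stdUniform, Measure.restrict_apply measurableSet_Iic]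
  have h : Iic u ∩ Icc (0:ℝ) 1 = Icc 0 u := by
    ext x
    simp only [mem_inter_iff, mem_Iic, mem_Icc]
    exact ⟨fun ⟨h, h2, _⟩ => ⟨h2, h⟩, fun ⟨h2, h⟩ => ⟨h, h2, h.trans h1⟩⟩
  rw [h, Real.volume_Icc, sub_zero]

lemma tendsto_stdUniform_Iic :
    Tendsto (fun u : ℝ => (stdUniform (Iic u)).toReal / u) (nhdsWithin 0 (Set.Ioi 0)) (nhds 1) := by
  have hev : ∀ᶠ u in nhdsWithin (0:ℝ) (Set.Ioi 0),
      (1:ℝ) = (stdUniform (Iic u)).toReal / u := by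
    filter_upwards [Ioo_mem_nhdsGT_of_mem (Set.left_mem_Ico.mpr one_pos)] with u hu
    rw [stdUniform_Iic hu.1.le hu.2.le, ENNReal.toReal_ofReal hu.1.le, div_self hu.1.ne']
  exact Tendsto.congr' hev tendsto_const_nhds

lemma onesTD (d : ℕ) : IsTailDependenceMatrix (Matrix.of fun _ _ : Fin d => (1:ℝ)) := by
  refine ⟨ℝ, inferInstance, stdUniform, inferInstance, fun ω _ => ω,
    measurable_pi_lambda _ (fun _ => measurable_id), fun i => Measure.map_id', fun i j => ?_⟩
  have h : ∀ u : ℝ, {ω : ℝ | ω ≤ u ∧ ω ≤ u} = Iic u := by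
    intro u; ext ω; simp [and_self, Set.mem_Iic]
  unfold HasTailDepCoeff
  simp only [h, Matrix.of_apply]
  exact tendsto_stdUniform_Iic

lemma mainAux {d : ℕ} (B Λ : Matrix (Fin d) (Fin d) ℝ)
    (hB : IsBernoulliCompatible B) (hΛ : IsTailDependenceMatrix Λ) :
    IsTailDependenceMatrix (diagOne (Matrix.of fun i j => B i j * Λ i j)) := by
  obtain ⟨Ω₁, m₁, μ₁, hμ₁, X, hXm, hX01, hBX⟩ := hB
  obtain ⟨Ω₂, m₂, μ₂, hμ₂, Y, hYm, hYmarg, hYtail⟩ := hΛ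
  set π : Measure (Fin d → ℝ) := Measure.pi (fun _ : Fin d => stdUniform) with hπ
  haveI : IsProbabilityMeasure π := by rw [hπ]; infer_instance
  set ν : Measure (Ω₂ × (Fin d → ℝ)) := μ₂.prod π with hν
  set μ : Measure (Ω₁ × Ω₂ × (Fin d → ℝ)) := μ₁.prod ν with hμ
  haveI : IsProbabilityMeasure ν := by rw [hν]; infer_instance
  haveI : IsProbabilityMeasure μ := by rw [hμ]; infer_instance
  set Z : Ω₁ × Ω₂ × (Fin d → ℝ) → Fin d → ℝ :=
    fun ω i => X ω.1 i * Y ω.2.1 i + (1 - X ω.1 i) * ω.2.2 i with hZ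
  have hXi : ∀ i : Fin d, Measurable fun ω₁ => X ω₁ i :=
    fun i => (measurable_pi_apply i).comp hXm
  have hYi : ∀ i : Fin d, Measurable fun ω₂ => Y ω₂ i :=
    fun i => (measurable_pi_apply i).comp hYm
  have hmsX : ∀ (k : Fin d) (a : ℝ), MeasurableSet {ω₁ | X ω₁ k = a} :=
    fun k a => (hXi k) (measurableSet_singleton a)
  have hZi : ∀ i : Fin d, Measurable fun ω => Z ω i := by
    intro i
    apply Measurable.add
    · exact ((hXi i).comp measurable_fst).mul
        ((hYi i).comp (measurable_fst.comp measurable_snd))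
    · exact (measurable_const.sub ((hXi i).comp measurable_fst)).mul
        ((measurable_pi_apply i).comp (measurable_snd.comp measurable_snd))
  have hZm : Measurable Z := measurable_pi_lambda _ hZi
  -- marginal measure of Y_i
  have hYIic : ∀ (i : Fin d) (u : ℝ), μ₂ {ω₂ | Y ω₂ i ≤ u} = stdUniform (Iic u) := by
    intro i u
    rw [← hYmarg i, Measure.map_apply (hYi i) measurableSet_Iic]
    rfl
  -- marginal of pi measure, one coordinate
  have hpi1 : ∀ (i : Fin d) (u : ℝ), π {v : Fin d → ℝ | v i ≤ u} = stdUniform (Iic u) := by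
    intro i u
    have hset : {v : Fin d → ℝ | v i ≤ u}
        = Set.pi univ (fun k => if k = i then Iic u else univ) := by
      ext v
      simp only [mem_setOf_eq, Set.mem_pi, mem_univ, forall_true_left]
      constructor
      · intro h k
        by_cases hk : k = i
        · subst hk; simp [h]
        · simp [hk]
      · intro h
        have := h i
        simpa using this
    rw [hset, hπ, Measure.pi_pi]
    have h2 : ∀ k : Fin d, stdUniform (if k = i then Iic u else univ)
        = if k = i then stdUniform (Iic u) else 1 := by
      intro k; split <;> simp
    simp_rw [h2]
    rw [Finset.prod_ite_eq' Finset.univ i (fun _ => stdUniform (Iic u))]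
    simp
  -- marginal of pi measure, two coordinates
  have hpi2 : ∀ (i j : Fin d), i ≠ j → ∀ u : ℝ,
      π {v : Fin d → ℝ | v i ≤ u ∧ v j ≤ u}
        = stdUniform (Iic u) * stdUniform (Iic u) := by
    intro i j hij u
    have hset : {v : Fin d → ℝ | v i ≤ u ∧ v j ≤ u}
        = Set.pi univ (fun k => if k = i then Iic u else if k = j then Iic u else univ) := by
      ext v
      simp only [mem_setOf_eq, Set.mem_pi, mem_univ, forall_true_left]
      constructor
      · intro h k
        by_cases hk : k = i
        · subst hk; simp [h.1]
        · by_cases hk2 : k = j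
          · subst hk2; simp [hk, h.2]
          · simp [hk, hk2]
      · intro h
        constructor
        · have := h i; simpa using this
        · have := h j
          simp only [if_neg (Ne.symm hij)] at this
          simpa using this
    rw [hset, hπ, Measure.pi_pi]
    have h2 : ∀ k : Fin d,
        stdUniform (if k = i then Iic u else if k = j then Iic u else univ)
          = (if k = i then stdUniform (Iic u) else 1)
            * (if k = j then stdUniform (Iic u) else 1) := by
      intro k
      by_cases h1 : k = i
      · subst h1
        simp [hij]
      · by_cases h2 : k = j <;> simp [h1, h2, Ne.symm hij]
    simp_rw [h2]
    rw [Finset.prod_mul_distrib,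
      Finset.prod_ite_eq' Finset.univ i (fun _ => stdUniform (Iic u)),
      Finset.prod_ite_eq' Finset.univ j (fun _ => stdUniform (Iic u))]
    simp
  -- the marginal distribution of Z i
  have hmarg : ∀ (i : Fin d) (u : ℝ), μ {ω | Z ω i ≤ u} = stdUniform (Iic u) := by
    intro i u
    have hset : {ω | Z ω i ≤ u}
        = ({ω₁ | X ω₁ i = 1} ×ˢ ({ω₂ | Y ω₂ i ≤ u} ×ˢ (univ : Set (Fin d → ℝ))))
          ∪ ({ω₁ | X ω₁ i = 0} ×ˢ ((univ : Set Ω₂) ×ˢ {v : Fin d → ℝ | v i ≤ u})) := by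
      ext ⟨ω₁, ω₂, v⟩
      rcases hX01 ω₁ i with h | h <;>
        simp [hZ, Set.mem_prod, h, mem_setOf_eq]
    have hd : Disjoint ({ω₁ | X ω₁ i = 1} ×ˢ ({ω₂ | Y ω₂ i ≤ u} ×ˢ (univ : Set (Fin d → ℝ))))
        ({ω₁ | X ω₁ i = 0} ×ˢ ((univ : Set Ω₂) ×ˢ {v : Fin d → ℝ | v i ≤ u})) := by
      refine Set.disjoint_left.mpr ?_
      rintro ⟨ω₁, p⟩ ⟨h1, -⟩ ⟨h0, -⟩
      exact one_ne_zero (h1.symm.trans h0)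
    have hms : MeasurableSet ({ω₁ | X ω₁ i = 0} ×ˢ ((univ : Set Ω₂) ×ˢ {v : Fin d → ℝ | v i ≤ u})) := by
      exact (hmsX i 0).prod
        (MeasurableSet.univ.prod ((measurable_pi_apply i) measurableSet_Iic))
    rw [hset, measure_union hd hms, hμ, Measure.prod_prod, Measure.prod_prod,
      hν, Measure.prod_prod, Measure.prod_prod]
    rw [hYIic i u, hpi1 i u]
    simp only [measure_univ, mul_one, one_mul]
    rw [← add_mul]
    have hsum : μ₁ {ω₁ | X ω₁ i = 1} + μ₁ {ω₁ | X ω₁ i = 0} = 1 := by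
      rw [← measure_union ?_ (hmsX i 0)]
      · have : {ω₁ | X ω₁ i = 1} ∪ {ω₁ | X ω₁ i = 0} = univ := by
          ext ω₁; rcases hX01 ω₁ i with h | h <;> simp [h]
        rw [this, measure_univ]
      · refine Set.disjoint_left.mpr ?_
        intro ω₁ h1 h0
        exact one_ne_zero (h1.symm.trans h0)
    rw [hsum, one_mul]
  refine ⟨Ω₁ × Ω₂ × (Fin d → ℝ), inferInstance, μ, inferInstance, Z, hZm, ?_, ?_⟩
  · intro i
    haveI : IsProbabilityMeasure (μ.map (fun ω => Z ω i)) :=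
      Measure.isProbabilityMeasure_map (hZi i).aemeasurable
    refine Measure.ext_of_Iic _ _ fun u => ?_
    rw [Measure.map_apply (hZi i) measurableSet_Iic]
    exact hmarg i u
  · intro i j
    unfold HasTailDepCoeff
    by_cases hij : i = j
    · subst hij
      have hset : ∀ u : ℝ, {ω | Z ω i ≤ u ∧ Z ω i ≤ u} = {ω | Z ω i ≤ u} := by
        intro u; ext ω; simp [and_self]
      have hval : diagOne (Matrix.of fun i j => B i j * Λ i j) i i = 1 := by
        simp [diagOne]
      rw [hval]
      have hev : ∀ᶠ u in nhdsWithin (0:ℝ) (Set.Ioi 0),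
          (stdUniform (Iic u)).toReal / u
            = (μ {ω | Z ω i ≤ u ∧ Z ω i ≤ u}).toReal / u := by
        filter_upwards with u
        rw [hset u, hmarg i u]
      exact Tendsto.congr' hev tendsto_stdUniform_Iic
    · -- off-diagonal case
      have hval : diagOne (Matrix.of fun i j => B i j * Λ i j) i j = B i j * Λ i j := by
        simp [diagOne, hij]
      rw [hval]
      set E : ℝ → ℝ → Set Ω₁ := fun a b => {ω₁ | X ω₁ i = a ∧ X ω₁ j = b} with hE
      have hEm : ∀ a b : ℝ, MeasurableSet (E a b) := by
        intro a b
        exact ((hXi i) (measurableSet_singleton a)).inter ((hXi j) (measurableSet_singleton b))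
      -- the joint measure decomposition
      have hjoint : ∀ u : ℝ, μ {ω | Z ω i ≤ u ∧ Z ω j ≤ u}
          = μ₁ (E 1 1) * μ₂ {ω₂ | Y ω₂ i ≤ u ∧ Y ω₂ j ≤ u}
            + μ₁ (E 1 0) * (stdUniform (Iic u) * stdUniform (Iic u))
            + μ₁ (E 0 1) * (stdUniform (Iic u) * stdUniform (Iic u))
            + μ₁ (E 0 0) * (stdUniform (Iic u) * stdUniform (Iic u)) := by
        intro u
        have hset : {ω | Z ω i ≤ u ∧ Z ω j ≤ u}
            = (E 1 1 ×ˢ ({ω₂ | Y ω₂ i ≤ u ∧ Y ω₂ j ≤ u} ×ˢ (univ : Set (Fin d → ℝ))))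
              ∪ (E 1 0 ×ˢ ({ω₂ | Y ω₂ i ≤ u} ×ˢ {v : Fin d → ℝ | v j ≤ u}))
              ∪ (E 0 1 ×ˢ ({ω₂ | Y ω₂ j ≤ u} ×ˢ {v : Fin d → ℝ | v i ≤ u}))
              ∪ (E 0 0 ×ˢ ((univ : Set Ω₂) ×ˢ {v : Fin d → ℝ | v i ≤ u ∧ v j ≤ u})) := by
          ext ⟨ω₁, ω₂, v⟩
          rcases hX01 ω₁ i with hi1 | hi1 <;> rcases hX01 ω₁ j with hj1 | hj1 <;>
            simp [hZ, hE, Set.mem_prod, hi1, hj1, mem_setOf_eq, and_comm]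
        have hdE : ∀ (a b a' b' : ℝ), (a ≠ a' ∨ b ≠ b') →
            ∀ (T T' : Set (Ω₂ × (Fin d → ℝ))), Disjoint (E a b ×ˢ T) (E a' b' ×ˢ T') := by
          intro a b a' b' hne T T'
          refine Set.disjoint_left.mpr ?_
          rintro ⟨ω₁, p⟩ ⟨⟨h1, h2⟩, -⟩ ⟨⟨h3, h4⟩, -⟩
          rcases hne with h | h
          · exact h (h1.symm.trans h3)
          · exact h (h2.symm.trans h4)
        have hmsY : ∀ k : Fin d, MeasurableSet {ω₂ | Y ω₂ k ≤ u} :=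
          fun k => (hYi k) measurableSet_Iic
        have hmsV : ∀ k : Fin d, MeasurableSet {v : Fin d → ℝ | v k ≤ u} :=
          fun k => (measurable_pi_apply k) measurableSet_Iic
        have hmsV2 : MeasurableSet {v : Fin d → ℝ | v i ≤ u ∧ v j ≤ u} := (hmsV i).inter (hmsV j)
        have hmsY2 : MeasurableSet {ω₂ | Y ω₂ i ≤ u ∧ Y ω₂ j ≤ u} := (hmsY i).inter (hmsY j)
        rw [hset]
        rw [measure_union (by
            refine Disjoint.union_left (Disjoint.union_left ?_ ?_) ?_
            · exact hdE 1 1 0 0 (Or.inl one_ne_zero) _ _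
            · exact hdE 1 0 0 0 (Or.inl one_ne_zero) _ _
            · exact hdE 0 1 0 0 (Or.inr one_ne_zero) _ _)
          ((hEm 0 0).prod (MeasurableSet.univ.prod hmsV2))]
        rw [measure_union (by
            refine Disjoint.union_left ?_ ?_
            · exact hdE 1 1 0 1 (Or.inl one_ne_zero) _ _
            · exact hdE 1 0 0 1 (Or.inl one_ne_zero) _ _)
          ((hEm 0 1).prod ((hmsY j).prod (hmsV i)))]
        rw [measure_union (hdE 1 1 1 0 (Or.inr one_ne_zero) _ _)
          ((hEm 1 0).prod ((hmsY i).prod (hmsV j)))]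
        rw [hμ, Measure.prod_prod, Measure.prod_prod, Measure.prod_prod, Measure.prod_prod,
          hν, Measure.prod_prod, Measure.prod_prod, Measure.prod_prod, Measure.prod_prod]
        rw [hYIic i u, hYIic j u, hpi1 i u, hpi1 j u, hpi2 i j hij u]
        simp only [measure_univ, mul_one, one_mul]
      -- B i j in terms of μ₁ (E 1 1)
      have hBE : B i j = (μ₁ (E 1 1)).toReal := by
        rw [hBX i j]
        have hind : (fun ω₁ => X ω₁ i * X ω₁ j) = Set.indicator (E 1 1) (fun _ => (1:ℝ)) := by
          funext ω₁
          rcases hX01 ω₁ i with h1 | h1 <;> rcases hX01 ω₁ j with h2 | h2 <;>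
            simp [Set.indicator_apply, hE, h1, h2]
        rw [hind, integral_indicator_const (1:ℝ) (hEm 1 1)]
        simp
        rfl
      -- the limit
      set p11 : ℝ := (μ₁ (E 1 1)).toReal with hp11
      set p10 : ℝ := (μ₁ (E 1 0)).toReal
      set p01 : ℝ := (μ₁ (E 0 1)).toReal
      set p00 : ℝ := (μ₁ (E 0 0)).toReal
      have hev : ∀ᶠ u in nhdsWithin (0:ℝ) (Set.Ioi 0),
          (p11 * ((μ₂ {ω₂ | Y ω₂ i ≤ u ∧ Y ω₂ j ≤ u}).toReal / u)
            + (p10 * u + p01 * u + p00 * u))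
          = (μ {ω | Z ω i ≤ u ∧ Z ω j ≤ u}).toReal / u := by
        filter_upwards [Ioo_mem_nhdsGT_of_mem (Set.left_mem_Ico.mpr one_pos)] with u hu
        rw [hjoint u]
        have hu0 : (0:ℝ) < u := hu.1
        have hfin : ∀ (s : Set Ω₁) (r : ENNReal), r ≠ ⊤ → μ₁ s * r ≠ ⊤ :=
          fun s r hr => ENNReal.mul_ne_top (measure_ne_top _ _) hr
        have hstd : stdUniform (Iic u) = ENNReal.ofReal u := stdUniform_Iic hu0.le hu.2.le
        rw [hstd]
        have hofu : (ENNReal.ofReal u * ENNReal.ofReal u) ≠ ⊤ := ENNReal.mul_ne_top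
          ENNReal.ofReal_ne_top ENNReal.ofReal_ne_top
        rw [ENNReal.toReal_add, ENNReal.toReal_add, ENNReal.toReal_add]
        · simp only [ENNReal.toReal_mul, ENNReal.toReal_ofReal hu0.le]
          field_simp
          ring
        · exact hfin _ _ (measure_ne_top _ _)
        · exact hfin _ _ hofu
        · exact ENNReal.add_ne_top.mpr ⟨hfin _ _ (measure_ne_top _ _), hfin _ _ hofu⟩
        · exact hfin _ _ hofu
        · exact ENNReal.add_ne_top.mpr ⟨ENNReal.add_ne_top.mpr
            ⟨hfin _ _ (measure_ne_top _ _), hfin _ _ hofu⟩, hfin _ _ hofu⟩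
        · exact hfin _ _ hofu
      have hu_tendsto : Tendsto (fun u : ℝ => u) (nhdsWithin 0 (Set.Ioi 0)) (nhds 0) :=
        tendsto_id.mono_left nhdsWithin_le_nhds
      have hlim : Tendsto (fun u : ℝ =>
          p11 * ((μ₂ {ω₂ | Y ω₂ i ≤ u ∧ Y ω₂ j ≤ u}).toReal / u)
            + (p10 * u + p01 * u + p00 * u))
          (nhdsWithin 0 (Set.Ioi 0))
          (nhds (p11 * Λ i j + (p10 * 0 + p01 * 0 + p00 * 0))) := by
        exact ((hYtail i j).const_mul p11).add
          (((hu_tendsto.const_mul p10).add (hu_tendsto.const_mul p01)).add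
            (hu_tendsto.const_mul p00))
      have hfinal : B i j * Λ i j = p11 * Λ i j + (p10 * 0 + p01 * 0 + p00 * 0) := by
        rw [hBE]; ring
      rw [hfinal]
      exact Tendsto.congr' hev hlim

/-- Proposition 4.3: for `B` Bernoulli-compatible and `Λ` a tail-dependence matrix,
`L(B ∘ Λ)` is a tail-dependence matrix; in particular `L(B)` is a tail-dependence matrix. -/
theorem L_hadamard_tail_dependence {d : ℕ} (B Λ : Matrix (Fin d) (Fin d) ℝ)
    (hB : IsBernoulliCompatible B) (hΛ : IsTailDependenceMatrix Λ) :
    IsTailDependenceMatrix (diagOne (Matrix.of fun i j => B i j * Λ i j)) ∧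
    IsTailDependenceMatrix (diagOne B) := by

  constructor
  · exact mainAux B Λ hB hΛ
  · have h1 := mainAux B (Matrix.of fun _ _ => (1:ℝ)) hB (onesTD d)
    have h2 : (Matrix.of fun i j => B i j * (Matrix.of fun _ _ : Fin d => (1:ℝ)) i j) = B := by
      ext i j; simp
    rwa [h2] at h1
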